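/- Let g, h : ℝⁿ → ℝ be strongly convex with modulus σ > 0, let ρ > 0 and ν ≥ 0, let x, y ∈ ℝⁿ with d := y − x, and let w ∈ ∂h(x) ∩ ∂g(y). If λ > 0 satisfies the line-search inequality φ(y + λ d) ≤ φ(y) − ρ λ² ‖d‖² + ν, then the next iterate x⁺ := y + λ d satisfies φ(x⁺) ≤ φ(x) − (σ + ρ λ²) ‖d‖² + ν, where φ = g − h. -/

import Mathlib

open Set Filter Topology

noncomputable section

/-- The (convex-analysis) subdifferential of `f` at `x`:
the set of `w` with `f z ≥ f x + ⟨w, z - x⟩` for all `z`. -/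
def subdiff {n : ℕ} (f : EuclideanSpace ℝ (Fin n) → ℝ) (x : EuclideanSpace ℝ (Fin n)) :
    Set (EuclideanSpace ℝ (Fin n)) :=
  {w | ∀ z, f x + (inner ℝ w (z - x) : ℝ) ≤ f z}

/-- `f` is strongly convex with modulus `σ`. -/
def StrongConvexWith {n : ℕ} (σ : ℝ) (f : EuclideanSpace ℝ (Fin n) → ℝ) : Prop :=
  ∀ x y : EuclideanSpace ℝ (Fin n), ∀ t : ℝ, 0 < t → t < 1 →
    f (t • x + (1 - t) • y) ≤ t * f x + (1 - t) * f y - σ / 2 * (t * (1 - t) * ‖x - y‖ ^ 2)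

lemma strong_subgrad {n : ℕ} {f : EuclideanSpace ℝ (Fin n) → ℝ} {σ : ℝ}
    (hf : StrongConvexWith σ f) {x w : EuclideanSpace ℝ (Fin n)}
    (hw : w ∈ subdiff f x) (z : EuclideanSpace ℝ (Fin n)) :
    f x + (inner ℝ w (z - x) : ℝ) + σ / 2 * ‖z - x‖ ^ 2 ≤ f z := by
  have key : ∀ t : ℝ, t ∈ Ioo (0:ℝ) 1 →
      f x + (inner ℝ w (z - x) : ℝ) + σ / 2 * (1 - t) * ‖z - x‖ ^ 2 ≤ f z := by
    rintro t ⟨ht0, ht1⟩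
    have h1 := hf z x t ht0 ht1
    have h2 := hw (t • z + (1 - t) • x)
    have harg : (t • z + (1 - t) • x) - x = t • (z - x) := by
      module
    rw [harg] at h2
    have hinner : (inner ℝ w (t • (z - x)) : ℝ) = t * inner ℝ w (z - x) := by
      rw [real_inner_smul_right]
    rw [hinner] at h2
    have := h2.trans h1
    nlinarith [norm_nonneg (z - x)]
  have htend : Tendsto (fun t : ℝ => f x + (inner ℝ w (z - x) : ℝ) + σ / 2 * (1 - t) * ‖z - x‖ ^ 2)
      (𝓝[>] (0:ℝ)) (𝓝 (f x + (inner ℝ w (z - x) : ℝ) + σ / 2 * ‖z - x‖ ^ 2)) := by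
    have : ContinuousAt (fun t : ℝ => f x + (inner ℝ w (z - x) : ℝ) + σ / 2 * (1 - t) * ‖z - x‖ ^ 2) 0 := by
      fun_prop
    simpa using this.continuousWithinAt.tendsto
  refine le_of_tendsto htend ?_
  filter_upwards [Ioo_mem_nhdsGT_of_mem (by norm_num : (0:ℝ) ∈ Ico (0:ℝ) 1)] with t ht
  exact key t ht

theorem stmt5 {n : ℕ} (g h : EuclideanSpace ℝ (Fin n) → ℝ) (σ ρ ν : ℝ)
    (hσ : 0 < σ) (hρ : 0 < ρ) (hν : 0 ≤ ν)
    (hgs : StrongConvexWith σ g) (hhs : StrongConvexWith σ h)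
    (x y w : EuclideanSpace ℝ (Fin n))
    (hw : w ∈ subdiff h x ∩ subdiff g y)
    (lam : ℝ) (hlam : 0 < lam)
    (hls : g (y + lam • (y - x)) - h (y + lam • (y - x)) ≤
      (g y - h y) - ρ * lam ^ 2 * ‖y - x‖ ^ 2 + ν) :
    g (y + lam • (y - x)) - h (y + lam • (y - x)) ≤
      (g x - h x) - (σ + ρ * lam ^ 2) * ‖y - x‖ ^ 2 + ν := by
  have hg := strong_subgrad hgs hw.2 x
  have hh := strong_subgrad hhs hw.1 y
  have hsym : (inner ℝ w (x - y) : ℝ) = - inner ℝ w (y - x) := by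
    rw [← inner_neg_right]; congr 1; abel
  have hnorm : ‖x - y‖ = ‖y - x‖ := norm_sub_rev _ _
  rw [hsym, hnorm] at hg
  nlinarith [norm_nonneg (y - x)]
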